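/- There exists a dimension-independent constant c such that for all d ≥ c and all y ∈ Z^d with |y|_1 ≤ d/2, the simple random walk on Z^d satisfies P_y[ |X_n|_1 > |y|_1 for all n > 0 ] ≥ 1 − 4(|y|_1 ∨ 1)/(2d − (|y|_1 ∨ 1)). -/

import Mathlib

open MeasureTheory Filter

abbrev Zd (d : ℕ) := Fin d → ℤ

/-- The unit step in direction `i`, with sign `s` (`true` = `+1`). -/
def dir (d : ℕ) (i : Fin d) (s : Bool) : Zd d :=
  fun j => if j = i then (if s then 1 else -1) else 0

/-- ℓ¹-norm on ℤ^d. -/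
def norm1 {d : ℕ} (x : Zd d) : ℕ := ∑ j, (x j).natAbs

/-- ℓ∞-norm on ℤ^d. -/
def normInf {d : ℕ} (x : Zd d) : ℕ := Finset.univ.sup fun j => (x j).natAbs

/-- Euclidean norm on ℤ^d. -/
noncomputable def euclid {d : ℕ} (x : Zd d) : ℝ := Real.sqrt (∑ j, ((x j : ℝ)) ^ 2)

/-- Nearest-neighbor adjacency on ℤ^d. -/
def adjZ {d : ℕ} (x y : Zd d) : Prop := norm1 (x - y) = 1

-- `avoidProb d K n x` is the probability that simple random walk started at `x`
-- stays outside `K` at all times `1, …, n`.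
open Classical in
noncomputable def avoidProb (d : ℕ) (K : Set (Zd d)) : ℕ → Zd d → ℝ
  | 0, _ => 1
  | n + 1, x => (2 * d : ℝ)⁻¹ * ∑ i : Fin d, ∑ s : Bool,
      (if x + dir d i s ∈ K then 0 else avoidProb d K n (x + dir d i s))

/-- `P_x[X_n ∉ K for all n ≥ 1]`. -/
noncomputable def escapeProb (d : ℕ) (K : Set (Zd d)) (x : Zd d) : ℝ :=
  ⨅ n : ℕ, avoidProb d K n x

/-- Capacity of `K` for simple random walk on ℤ^d. -/
noncomputable def capa (d : ℕ) (K : Set (Zd d)) : ℝ :=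
  ∑' x : K, escapeProb d K (x : Zd d)

/-- Closed Euclidean ball of radius `L` around the origin in ℤ^d. -/
def ballE (d : ℕ) (L : ℝ) : Set (Zd d) := {x | euclid x ≤ L}

namespace EscapeAux
open Finset
variable {d : ℕ}

def usq (x : Zd d) : ℤ := ∑ j, (x j)^2

def rr (x : Zd d) : ℕ := (Finset.univ.filter fun j => x j ≠ 0).card

lemma norm1_int (x : Zd d) : (norm1 x : ℤ) = ∑ j, |x j| := by
  simp [norm1, Int.natCast_natAbs]

lemma add_dir_apply (x : Zd d) (i : Fin d) (s : Bool) (j : Fin d) :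
    (x + dir d i s) j = x j + if j = i then (if s then 1 else -1) else 0 := rfl

lemma norm1_add_dir (x : Zd d) (i : Fin d) (s : Bool) :
    (norm1 (x + dir d i s) : ℤ)
      = (norm1 x : ℤ) - |x i| + |x i + (if s then 1 else -1)| := by
  rw [norm1_int, norm1_int]
  have h : ∀ j : Fin d, |(x + dir d i s) j| - |x j|
      = if j = i then |x i + (if s then 1 else -1)| - |x i| else 0 := by
    intro j
    rw [add_dir_apply]
    by_cases hj : j = i <;> simp [hj]
  have := Finset.sum_congr rfl (fun j (_ : j ∈ Finset.univ) => h j)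
  rw [Finset.sum_sub_distrib] at this
  rw [Finset.sum_ite_eq' Finset.univ i (fun _ => |x i + (if s then 1 else -1)| - |x i|)] at this
  simp only [Finset.mem_univ, if_true] at this
  simp only [Pi.add_apply] at this ⊢
  linarith

lemma usq_add_dir (x : Zd d) (i : Fin d) (s : Bool) :
    usq (x + dir d i s) = usq x + 2 * (if s then 1 else -1) * x i + 1 := by
  unfold usq
  have h : ∀ j : Fin d, ((x + dir d i s) j)^2 - (x j)^2
      = if j = i then 2 * (if s then 1 else -1) * x i + 1 else 0 := by
    intro j
    rw [add_dir_apply]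
    by_cases hj : j = i
    · cases s <;> simp [hj] <;> ring
    · simp [hj]
  have := Finset.sum_congr rfl (fun j (_ : j ∈ Finset.univ) => h j)
  rw [Finset.sum_sub_distrib] at this
  rw [Finset.sum_ite_eq' Finset.univ i] at this
  simp only [Finset.mem_univ, if_true] at this
  simp only [Pi.add_apply] at this ⊢
  linarith

lemma usq_nonneg (x : Zd d) : 0 ≤ usq x :=
  Finset.sum_nonneg (fun j _ => sq_nonneg (x j))

lemma norm1_le_usq (x : Zd d) : (norm1 x : ℤ) ≤ usq x := by
  rw [norm1_int]
  refine Finset.sum_le_sum (fun j _ => ?_)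
  have h := abs_nonneg (x j)
  nlinarith [sq_abs (x j), sq_nonneg (|x j| - 1)]

lemma rr_le_d (x : Zd d) : rr x ≤ d := by
  simpa [rr] using Finset.card_filter_le Finset.univ (fun j => x j ≠ 0)

lemma rr_le_norm1 (x : Zd d) : rr x ≤ norm1 x := by
  unfold rr norm1
  rw [← Finset.sum_filter_add_sum_filter_not Finset.univ (fun j => x j ≠ 0) (fun j => (x j).natAbs)]
  have h1 : (Finset.univ.filter fun j => x j ≠ 0).card
      ≤ ∑ j ∈ Finset.univ.filter (fun j => x j ≠ 0), (x j).natAbs := by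
    rw [Finset.card_eq_sum_ones]
    refine Finset.sum_le_sum (fun j hj => ?_)
    have h2 := (Finset.mem_filter.mp hj).2
    have : (x j).natAbs ≠ 0 := fun h => h2 (Int.natAbs_eq_zero.mp h)
    omega
  omega

lemma usq_spike (x : Zd d) :
    usq x ≤ ((norm1 x : ℤ) - rr x + 1)^2 + rr x - 1 := by
  classical
  set T := Finset.univ.filter (fun j => x j ≠ 0) with hT
  have hb : ∀ j ∈ T, (0:ℤ) ≤ |x j| - 1 := by
    intro j hj
    have h2 := (Finset.mem_filter.mp hj).2
    have : 1 ≤ |x j| := by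
      rcases lt_trichotomy (x j) 0 with h | h | h
      · rw [abs_of_neg h]; omega
      · exact absurd h h2
      · rw [abs_of_pos h]; omega
    linarith
  set q := ∑ j ∈ T, (|x j| - 1) with hq
  have hq0 : 0 ≤ q := Finset.sum_nonneg hb
  have husq : usq x = ∑ j ∈ T, (x j)^2 := by
    rw [usq, hT]
    rw [Finset.sum_filter_of_ne]
    intro j _ hne
    intro h0
    rw [h0] at hne
    simp at hne
  have hl : (norm1 x : ℤ) = ∑ j ∈ T, |x j| := by
    rw [norm1_int, hT, Finset.sum_filter_of_ne]
    intro j _ hne h0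
    rw [h0] at hne
    simp at hne
  have hrT : (rr x : ℤ) = ∑ j ∈ T, (1:ℤ) := by
    rw [rr, hT]; simp
  have hsq : ∀ j ∈ T, (x j)^2 = (|x j| - 1)^2 + 2 * (|x j| - 1) + 1 := by
    intro j _
    have := sq_abs (x j)
    nlinarith [sq_abs (x j)]
  have hs1 : ∑ j ∈ T, (x j)^2 = ∑ j ∈ T, ((|x j| - 1)^2 + 2 * (|x j| - 1) + 1) :=
    Finset.sum_congr rfl hsq
  have hs2 : ∑ j ∈ T, ((|x j| - 1)^2 + 2 * (|x j| - 1) + 1)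
      = (∑ j ∈ T, (|x j| - 1)^2) + 2 * q + (rr x : ℤ) := by
    rw [Finset.sum_add_distrib, Finset.sum_add_distrib, ← Finset.mul_sum, hrT, hq]
  have hs3 : ∑ j ∈ T, (|x j| - 1)^2 ≤ q * q := by
    calc ∑ j ∈ T, (|x j| - 1)^2 ≤ ∑ j ∈ T, (|x j| - 1) * q := by
          refine Finset.sum_le_sum (fun j hj => ?_)
          have h1 := hb j hj
          have h2 : |x j| - 1 ≤ q := Finset.single_le_sum hb hj
          nlinarith
      _ = q * q := by rw [← Finset.sum_mul, ← hq]
  have hql : q = (norm1 x : ℤ) - rr x := by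
    rw [hq, hl, hrT, Finset.sum_sub_distrib]
  nlinarith [hs1, hs2, hs3, husq]

lemma num7 (n : ℕ) : (n:ℝ)^7 ≤ 10000 * 2^n := by
  have key : ∀ k : ℕ, 12 ≤ k → (k:ℝ)^7 ≤ 10000 * 2^k := by
    intro k hk
    induction k, hk using Nat.le_induction with
    | base => norm_num
    | succ k hk ih =>
      have h12 : (12:ℝ) ≤ (k:ℝ) := by exact_mod_cast hk
      have h0 : (0:ℝ) ≤ (k:ℝ) := by positivity
      have hstep : ((k:ℝ) + 1)^7 ≤ 2 * (k:ℝ)^7 := by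
        nlinarith [mul_le_mul_of_nonneg_right h12 (pow_nonneg h0 6),
          mul_le_mul_of_nonneg_right h12 (pow_nonneg h0 5),
          mul_le_mul_of_nonneg_right h12 (pow_nonneg h0 4),
          mul_le_mul_of_nonneg_right h12 (pow_nonneg h0 3),
          mul_le_mul_of_nonneg_right h12 (pow_nonneg h0 2),
          mul_le_mul_of_nonneg_right h12 (pow_nonneg h0 1),
          mul_le_mul_of_nonneg_right h12 (pow_nonneg h0 0)]
      push_cast
      calc ((k:ℝ) + 1)^7 ≤ 2 * (k:ℝ)^7 := hstep
        _ ≤ 2 * (10000 * 2^k) := by linarith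
        _ = 10000 * 2^(k+1) := by ring
  by_cases h : 12 ≤ n
  · exact key n h
  · interval_cases n <;> norm_num

lemma num5 (j : ℕ) (hj : 1 ≤ j) : (j:ℝ)^5 * (1/2)^j ≤ 10000 := by
  have h1 : (1:ℝ) ≤ (j:ℝ) := by exact_mod_cast hj
  have h57 : (j:ℝ)^5 ≤ (j:ℝ)^7 := pow_le_pow_right₀ h1 (by norm_num)
  have h7 := num7 j
  have h2 : (0:ℝ) < 2^j := by positivity
  have : (j:ℝ)^5 * (1/2)^j ≤ (j:ℝ)^7 * (1/2)^j := by
    apply mul_le_mul_of_nonneg_right h57 (by positivity)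
  refine this.trans ?_
  rw [one_div, inv_pow, mul_inv_le_iff₀ h2]
  linarith

lemma coreD1 (U c : ℝ) (hU : 1 ≤ U) (hc : c^2 ≤ 4*U) :
    1/(U+2+c) + 1/(U+2-c) ≤ 2/(U+2) + 2*c^2/((U+1)*(U^2+4)) := by
  have hA : (0:ℝ) < U + 2 := by linarith
  have hprod : U^2 + 4 ≤ (U+2+c)*(U+2-c) := by nlinarith
  have hprodpos : (0:ℝ) < (U+2+c)*(U+2-c) := by nlinarith
  have hp1 : (0:ℝ) < U+2+c := by nlinarith [sq_nonneg (U+2+c), sq_nonneg (U+2-c)]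
  have hp2 : (0:ℝ) < U+2-c := by nlinarith [sq_nonneg (U+2+c), sq_nonneg (U+2-c)]
  have step1 : 1/(U+2+c) + 1/(U+2-c)
      = 2/(U+2) + 2*c^2/((U+2)*((U+2+c)*(U+2-c))) := by
    field_simp
    try ring
  rw [step1]
  have hden : (U+1)*(U^2+4) ≤ (U+2)*((U+2+c)*(U+2-c)) := by nlinarith
  have hbpos : (0:ℝ) < (U+1)*(U^2+4) := by positivity
  exact add_le_add_right
    (div_le_div_of_nonneg_left (by positivity) hbpos hden) _

lemma coreD2 (U d : ℝ) (hU : 1 ≤ U) (hd : 8 ≤ d) :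
    2*d/(U+2) + 8*U/((U+1)*(U^2+4)) ≤ 2*d/(U+1) - d/(U+3)^2 := by
  have h1 : (0:ℝ) < U+1 := by linarith
  have h2 : (0:ℝ) < U+2 := by linarith
  have h3 : (0:ℝ) < U+3 := by linarith
  have h4 : (0:ℝ) < U^2+4 := by positivity
  rw [← sub_nonneg]
  have expand : 2*d/(U+1) - d/(U+3)^2 - (2*d/(U+2) + 8*U/((U+1)*(U^2+4)))
      = (d*(U^2+4)*(U^2+9*U+16) - 8*U*(U+2)*(U+3)^2)
        / ((U+1)*(U+2)*(U+3)^2*(U^2+4)) := by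
    field_simp
    ring
  rw [expand]
  apply div_nonneg
  · have hQ : (0:ℝ) ≤ (U^2+4)*(U^2+9*U+16) := by positivity
    have h8 : 8*((U^2+4)*(U^2+9*U+16)) ≤ d*((U^2+4)*(U^2+9*U+16)) := by nlinarith
    nlinarith [h8, mul_nonneg (sq_nonneg U) (by linarith : (0:ℝ) ≤ U - 1)]
  · positivity

set_option maxHeartbeats 2000000 in
lemma coreE (m Mn r j : ℕ) (d lam U : ℝ)
    (hd : 10^7 ≤ d) (hMn : Mn = max m 1) (hM5 : 5*(Mn:ℝ) < 2*d)
    (hlam : lam = 2*Mn/(2*d - Mn))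
    (hr1 : 1 ≤ r) (hrd : (r:ℝ) ≤ d) (hrl : r ≤ m + j) (hj : 1 ≤ j)
    (hUl : (m:ℝ) + (j:ℝ) ≤ U)
    (hUb : U ≤ ((m:ℝ) + (j:ℝ) - (r:ℝ) + 1)^2 + (r:ℝ) - 1) :
    lam^(j-1) * (lam^2 - lam + (r:ℝ)*(1 - lam^2)/(2*d))
      ≤ lam*((m:ℝ)+2) / (4*(U+3)^2) := by
  have hMn1 : 1 ≤ Mn := by rw [hMn]; exact le_max_right m 1
  have hmMn : m ≤ Mn := by rw [hMn]; exact le_max_left m 1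
  have hMnm : Mn ≤ m + 1 := by rw [hMn]; exact max_le (Nat.le_succ m) (by omega)
  have hM1R : (1:ℝ) ≤ (Mn:ℝ) := by exact_mod_cast hMn1
  have hmMR : (m:ℝ) ≤ (Mn:ℝ) := by exact_mod_cast hmMn
  have hMmR : (Mn:ℝ) ≤ (m:ℝ) + 1 := by exact_mod_cast hMnm
  have hdpos : (0:ℝ) < d := by linarith
  have h2dM : (0:ℝ) < 2*d - Mn := by linarith
  have hlam_pos : 0 < lam := by
    rw [hlam]; apply div_pos <;> linarith
  have hlam_half : lam ≤ 1/2 := by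
    rw [hlam, div_le_div_iff₀ h2dM (by norm_num)]
    linarith
  have hlam_ge : (Mn:ℝ)/d ≤ lam := by
    rw [hlam, div_le_div_iff₀ hdpos h2dM]
    linarith [sq_nonneg ((Mn:ℝ))]
  have hjR : (1:ℝ) ≤ (j:ℝ) := by exact_mod_cast hj
  have hrR : (r:ℝ) ≤ (m:ℝ) + (j:ℝ) := by exact_mod_cast hrl
  have hU30 : (0:ℝ) < U + 3 := by linarith
  have h0lam : (0:ℝ) ≤ lam := hlam_pos.le
  have h0pow : (0:ℝ) ≤ lam^(j-1) := pow_nonneg h0lam _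
  have hpow : lam^(j-1) ≤ (1/2:ℝ)^(j-1) := pow_le_pow_left₀ h0lam hlam_half _
  have hMd : (Mn:ℝ) ≤ d*lam := by
    have := (div_le_iff₀ hdpos).mp hlam_ge
    linarith
  set B : ℝ := 2*d*lam/(1+lam) with hB
  have hlam1 : (0:ℝ) < 1 + lam := by linarith
  have hBalt : B = 4*d*(Mn:ℝ)/(2*d+(Mn:ℝ)) := by
    rw [hB, hlam]
    rw [div_eq_div_iff (by positivity) (by linarith)]
    field_simp
    ring
  have h2dMn : (0:ℝ) < 2*d + Mn := by linarith
  have hB53 : 5*(Mn:ℝ)/3 ≤ B := by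
    rw [hBalt, div_le_div_iff₀ (by norm_num) h2dMn]
    linarith [mul_nonneg (by positivity : (0:ℝ) ≤ (Mn:ℝ))
      (by linarith : (0:ℝ) ≤ 2*d - 5*(Mn:ℝ))]
  have hB0 : (0:ℝ) ≤ B := by linarith
  by_cases hbr : lam^2 - lam + (r:ℝ)*(1 - lam^2)/(2*d) ≤ 0
  · have hL : lam^(j-1) * (lam^2 - lam + (r:ℝ)*(1 - lam^2)/(2*d)) ≤ 0 :=
      mul_nonpos_of_nonneg_of_nonpos h0pow hbr
    have hR : (0:ℝ) ≤ lam*((m:ℝ)+2) / (4*(U+3)^2) := by positivity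
    linarith
  push_neg at hbr
  have hbr_id : lam^2 - lam + (r:ℝ)*(1 - lam^2)/(2*d)
      = (1-lam^2)*((r:ℝ) - B)/(2*d) := by
    rw [hB]
    field_simp
    ring
  have h1m : (0:ℝ) < 1 - lam^2 := by
    have hq : lam*lam ≤ (1/2)*(1/2) := mul_le_mul hlam_half hlam_half h0lam (by norm_num)
    have : lam^2 = lam*lam := sq lam ▸ rfl
    nlinarith [hq]
  have hrB0 : (0:ℝ) < (r:ℝ) - B := by
    rw [hbr_id] at hbr
    by_contra hcon
    push_neg at hcon
    have : (1-lam^2)*((r:ℝ) - B) ≤ 0 := mul_nonpos_of_nonneg_of_nonpos h1m.le hcon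
    have : (1-lam^2)*((r:ℝ) - B)/(2*d) ≤ 0 := div_nonpos_of_nonpos_of_nonneg this (by linarith)
    linarith
  -- main reduction
  rw [hbr_id, ← mul_div_assoc, div_le_div_iff₀ (by linarith : (0:ℝ) < 2*d) (by positivity)]
  suffices T1 : 2*(U+3)^2 * (lam^(j-1) * ((r:ℝ) - B)) ≤ d * (lam * ((m:ℝ)+2)) by
    calc lam^(j-1)*((1-lam^2)*((r:ℝ)-B))*(4*(U+3)^2)
        ≤ lam^(j-1)*(1*((r:ℝ)-B))*(4*(U+3)^2) := by
          have h1 : (1-lam^2) ≤ 1 := by nlinarith [sq_nonneg lam]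
          have h2 : lam^(j-1)*((1-lam^2)*((r:ℝ)-B)) ≤ lam^(j-1)*(1*((r:ℝ)-B)) := by
            apply mul_le_mul_of_nonneg_left _ h0pow
            apply mul_le_mul_of_nonneg_right h1 hrB0.le
          apply mul_le_mul_of_nonneg_right h2 (by positivity)
      _ = 2*(2*(U+3)^2 * (lam^(j-1)*((r:ℝ)-B))) := by ring
      _ ≤ 2*(d*(lam*((m:ℝ)+2))) := by linarith [T1]
      _ = lam*((m:ℝ)+2)*(2*d) := by ring
  -- the zone bound
  have hmr : m < r := by
    have hcast : (m:ℝ) < (r:ℝ) := by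
      have h0Mn : (0:ℝ) ≤ (Mn:ℝ) := by positivity
      linarith [hB53, hrB0, hmMR]
    exact_mod_cast hcast
  set Pn : ℕ := m + j - r with hPn
  have hPnR : (Pn:ℝ) = (m:ℝ) + (j:ℝ) - (r:ℝ) := by
    rw [hPn]
    push_cast [Nat.cast_sub hrl]
    ring
  have hUb' : U + 3 ≤ ((Pn:ℝ)+1)^2 + (r:ℝ) + 2 := by
    rw [hPnR]; linarith
  rcases le_or_gt r (2*Mn) with hcase | hcase
  · -- case (a) : r ≤ 2M
    have hcR : (r:ℝ) ≤ 2*(Mn:ℝ) := by exact_mod_cast hcase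
    have hrB : (r:ℝ) - B ≤ (Mn:ℝ)^2/d := by
      have e1 : 2*(Mn:ℝ) - 4*d*Mn/(2*d+Mn) = 2*(Mn:ℝ)^2/(2*d+Mn) := by
        field_simp; ring
      have e2 : 2*(Mn:ℝ)^2/(2*d+Mn) ≤ (Mn:ℝ)^2/d := by
        rw [div_le_div_iff₀ h2dMn hdpos]
        linarith [mul_nonneg (mul_nonneg (by positivity : (0:ℝ) ≤ (Mn:ℝ))
          (by positivity : (0:ℝ) ≤ (Mn:ℝ))) (by positivity : (0:ℝ) ≤ (Mn:ℝ))]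
      rw [hBalt]; linarith
    have hPj : Pn + 1 ≤ j := by omega
    have hPjR : (Pn:ℝ) + 1 ≤ (j:ℝ) := by exact_mod_cast hPj
    have hM32 : (Mn:ℝ) ≤ 3/2 * (j:ℝ) := by linarith [hB53, hrB0, hrR, hmMR]
    have hU3 : U + 3 ≤ 11/2 * (j:ℝ)^2 := by
      have h2' : ((Pn:ℝ)+1)^2 ≤ (j:ℝ)^2 := by
        apply pow_le_pow_left₀ (by positivity) hPjR
      have hjj1 : (j:ℝ) ≤ (j:ℝ)^2 := by
        nlinarith [mul_nonneg (by linarith : (0:ℝ) ≤ (j:ℝ)-1) (by positivity : (0:ℝ) ≤ (j:ℝ))]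
      have hjj2 : (1:ℝ) ≤ (j:ℝ)^2 := by linarith
      linarith [hUb', h2', hM32, hmMR, hrR]
    have hUsq : (U+3)^2 ≤ (11/2 * (j:ℝ)^2)^2 :=
      pow_le_pow_left₀ (by linarith) hU3 2
    have hhalf : ((1/2:ℝ))^(j-1) = 2 * (1/2:ℝ)^j := by
      have hj' : j - 1 + 1 = j := Nat.succ_pred_eq_of_pos hj
      have e0 : (1/2:ℝ)^j = (1/2)^(j-1) * (1/2) := by rw [← pow_succ, hj']
      rw [e0]; ring
    have key : (121/2) * (j:ℝ)^4 * ((1/2:ℝ))^(j-1) * (Mn:ℝ) ≤ 2*d := by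
      have h5 : (j:ℝ)^5 * (1/2:ℝ)^j ≤ 10000 := num5 j hj
      have e : (121/2) * (j:ℝ)^4 * ((1/2:ℝ))^(j-1) * (Mn:ℝ)
          ≤ (121/2) * (j:ℝ)^4 * (2 * (1/2:ℝ)^j) * (3/2 * (j:ℝ)) := by
        rw [hhalf]
        have hnn2 : (0:ℝ) ≤ (121/2) * (j:ℝ)^4 * (2 * (1/2:ℝ)^j) := by positivity
        exact mul_le_mul_of_nonneg_left (hM32) hnn2
      have e2 : (121/2) * (j:ℝ)^4 * (2 * (1/2:ℝ)^j) * (3/2 * (j:ℝ))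
          = (363/2) * ((j:ℝ)^5 * (1/2:ℝ)^j) := by ring
      linarith [e, e2, h5, hd]
    -- assemble case (a)
    calc 2*(U+3)^2 * (lam^(j-1) * ((r:ℝ) - B))
        ≤ 2*((11/2 * (j:ℝ)^2)^2) * ((1/2:ℝ)^(j-1) * ((Mn:ℝ)^2/d)) := by
          apply mul_le_mul
          · linarith
          · apply mul_le_mul hpow hrB hrB0.le (by positivity)
          · exact mul_nonneg h0pow hrB0.le
          · positivity
      _ = ((121/2) * (j:ℝ)^4 * ((1/2:ℝ))^(j-1) * (Mn:ℝ)) * ((Mn:ℝ)/d) := by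
          ring
      _ ≤ (2*d) * ((Mn:ℝ)/d) := by
          apply mul_le_mul_of_nonneg_right key (by positivity)
      _ = 2*(Mn:ℝ) := by
          field_simp
          try ring
      _ ≤ d * (lam * ((m:ℝ)+2)) := by
          have h1 : 2*(Mn:ℝ) ≤ 2*(d*lam) := by linarith
          have h2 : 2*(d*lam) ≤ ((m:ℝ)+2)*(d*lam) := by
            apply mul_le_mul_of_nonneg_right _ (by positivity)
            have : (0:ℝ) ≤ (m:ℝ) := by positivity
            linarith
          linarith [h1, h2]
  · -- case (b) : r ≥ 2M+1
    have hj2 : Mn + 1 ≤ j := by omega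
    have hj2R : (Mn:ℝ) + 1 ≤ (j:ℝ) := by exact_mod_cast hj2
    have hPb : Pn + 1 ≤ j - Mn := by omega
    have hPbR : (Pn:ℝ) + 1 ≤ (j:ℝ) - (Mn:ℝ) := by
      have : ((j - Mn : ℕ):ℝ) = (j:ℝ) - (Mn:ℝ) := by
        rw [Nat.cast_sub (by omega)]
      rw [← this]
      exact_mod_cast hPb
    have hU3' : U + 3 ≤ 2 * (j:ℝ)^2 := by
      have h2' : ((Pn:ℝ)+1)^2 ≤ ((j:ℝ)-(Mn:ℝ))^2 := by
        apply pow_le_pow_left₀ (by positivity) hPbR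
      have h3' : ((j:ℝ)-(Mn:ℝ))^2 ≤ ((j:ℝ)-1)^2 := by
        apply pow_le_pow_left₀ (by linarith) (by linarith)
      have hjj : 2*(j:ℝ) ≤ (j:ℝ)^2 := by
        nlinarith [mul_nonneg (by linarith : (0:ℝ) ≤ (j:ℝ)-2) (by positivity : (0:ℝ) ≤ (j:ℝ))]
      linarith [hUb', h2', h3', hrR, hmMR, hj2R, hjj]
    have hrB' : (r:ℝ) - B ≤ 2*(j:ℝ) := by linarith [hB0, hrR, hmMR, hj2R]
    have hUsq : (U+3)^2 ≤ (2 * (j:ℝ)^2)^2 :=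
      pow_le_pow_left₀ (by linarith) hU3' 2
    have hj2' : 2 ≤ j := by omega
    have epow : lam^(j-1) = lam^(j-2) * lam := by
      have : j - 1 = (j-2) + 1 := by omega
      rw [this, pow_succ]
    have hpow2 : lam^(j-2) ≤ (1/2:ℝ)^(j-2) := pow_le_pow_left₀ h0lam hlam_half _
    have hhalf2 : ((1/2:ℝ))^(j-2) = 4 * (1/2:ℝ)^j := by
      have hjj : j = (j-2) + 2 := by omega
      calc ((1/2:ℝ))^(j-2) = ((1/2:ℝ))^(j-2) * 1 := by ring
        _ = 4 * ((1/2:ℝ)^(j-2) * (1/2)^2) := by ring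
        _ = 4 * (1/2:ℝ)^((j-2)+2) := by rw [pow_add]
        _ = 4 * (1/2:ℝ)^j := by rw [← hjj]
    have key : 2*(2 * (j:ℝ)^2)^2 * (lam^(j-2) * (2*(j:ℝ))) ≤ d := by
      have h5 : (j:ℝ)^5 * (1/2:ℝ)^j ≤ 10000 := num5 j hj
      have e : 2*(2 * (j:ℝ)^2)^2 * (lam^(j-2) * (2*(j:ℝ)))
          ≤ 2*(2 * (j:ℝ)^2)^2 * ((4 * (1/2:ℝ)^j) * (2*(j:ℝ))) := by
        have := hpow2.trans_eq hhalf2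
        have hnn2 : (0:ℝ) ≤ 2*(2 * (j:ℝ)^2)^2 := by positivity
        apply mul_le_mul_of_nonneg_left _ hnn2
        apply mul_le_mul_of_nonneg_right this (by positivity)
      have e2 : 2*(2 * (j:ℝ)^2)^2 * ((4 * (1/2:ℝ)^j) * (2*(j:ℝ)))
          = 64 * ((j:ℝ)^5 * (1/2:ℝ)^j) := by ring
      linarith [e, e2, h5, hd]
    calc 2*(U+3)^2 * (lam^(j-1) * ((r:ℝ) - B))
        ≤ 2*(2 * (j:ℝ)^2)^2 * ((lam^(j-2)*lam) * (2*(j:ℝ))) := by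
          apply mul_le_mul
          · linarith
          · rw [← epow]
            apply mul_le_mul_of_nonneg_left hrB' h0pow
          · exact mul_nonneg h0pow hrB0.le
          · positivity
      _ = (2*(2 * (j:ℝ)^2)^2 * (lam^(j-2) * (2*(j:ℝ)))) * lam := by ring
      _ ≤ d * lam := by
          apply mul_le_mul_of_nonneg_right key h0lam
      _ ≤ d * (lam * ((m:ℝ)+2)) := by
          have hm0' : (0:ℝ) ≤ (m:ℝ) := by positivity
          linarith [mul_nonneg (mul_nonneg hdpos.le h0lam) (by linarith : (0:ℝ) ≤ (m:ℝ)+1)]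

lemma norm1_step_zero (x : Zd d) (i : Fin d) (s : Bool) (h : x i = 0) :
    norm1 (x + dir d i s) = norm1 x + 1 := by
  have hint := norm1_add_dir x i s
  rw [h] at hint
  have : (norm1 (x + dir d i s) : ℤ) = (norm1 x : ℤ) + 1 := by
    cases s <;> simpa using hint
  exact_mod_cast this

lemma norm1_add_dir_true (x : Zd d) (i : Fin d) :
    (norm1 (x + dir d i true) : ℤ) = (norm1 x : ℤ) - |x i| + |x i + 1| := by
  simpa using norm1_add_dir x i true

lemma norm1_add_dir_false (x : Zd d) (i : Fin d) :
    (norm1 (x + dir d i false) : ℤ) = (norm1 x : ℤ) - |x i| + |x i - 1| := by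
  have h := norm1_add_dir x i false
  simpa [sub_eq_add_neg] using h

lemma norm1_step_pos (x : Zd d) (i : Fin d) (h : 0 < x i) :
    norm1 (x + dir d i true) = norm1 x + 1
      ∧ norm1 (x + dir d i false) + 1 = norm1 x := by
  have ht := norm1_add_dir_true x i
  have hf := norm1_add_dir_false x i
  rw [abs_of_pos h] at ht hf
  rw [abs_of_pos (by omega : (0:ℤ) < x i + 1)] at ht
  rw [abs_of_nonneg (by omega : (0:ℤ) ≤ x i - 1)] at hf
  constructor
  · exact_mod_cast (by omega : (norm1 (x + dir d i true) : ℤ) = (norm1 x : ℤ) + 1)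
  · exact_mod_cast (by omega : (norm1 (x + dir d i false) : ℤ) + 1 = (norm1 x : ℤ))

lemma norm1_step_neg (x : Zd d) (i : Fin d) (h : x i < 0) :
    norm1 (x + dir d i false) = norm1 x + 1
      ∧ norm1 (x + dir d i true) + 1 = norm1 x := by
  have ht := norm1_add_dir_true x i
  have hf := norm1_add_dir_false x i
  rw [abs_of_neg h] at ht hf
  rw [abs_of_nonpos (by omega : x i + 1 ≤ (0:ℤ))] at ht
  rw [abs_of_neg (by omega : x i - 1 < (0:ℤ))] at hf
  constructor
  · exact_mod_cast (by omega : (norm1 (x + dir d i false) : ℤ) = (norm1 x : ℤ) + 1)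
  · exact_mod_cast (by omega : (norm1 (x + dir d i true) : ℤ) + 1 = (norm1 x : ℤ))

lemma rr_pos_of_norm1_pos (x : Zd d) (h : 1 ≤ norm1 x) : 1 ≤ rr x := by
  by_contra hc
  push_neg at hc
  have hr0 : rr x = 0 := by omega
  have : ∀ i : Fin d, x i = 0 := by
    intro i
    by_contra hne
    have : i ∈ Finset.univ.filter (fun j => x j ≠ 0) := by
      simp [hne]
    have := Finset.card_pos.mpr ⟨i, this⟩
    rw [rr] at hr0
    omega
  have : norm1 x = 0 := by
    unfold norm1
    apply Finset.sum_eq_zero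
    intro i _
    rw [this i]
    rfl
  omega

noncomputable def lamv (d m : ℕ) : ℝ :=
  2*((max m 1 : ℕ):ℝ)/(2*(d:ℝ) - ((max m 1 : ℕ):ℝ))

noncomputable def gfun (d m : ℕ) (x : Zd d) : ℝ :=
  (lamv d m)^(norm1 x - m) + (lamv d m)*((m:ℝ)+2)/2 / ((usq x : ℝ) + 1)

lemma lamv_pos (d m : ℕ) (hM5 : 5*((max m 1 : ℕ):ℝ) < 2*(d:ℝ)) : 0 < lamv d m := by
  have h1 : (1:ℝ) ≤ ((max m 1 : ℕ):ℝ) := by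
    exact_mod_cast Nat.one_le_iff_ne_zero.mpr (by positivity)
  unfold lamv
  apply div_pos <;> linarith

lemma lamv_half (d m : ℕ) (hM5 : 5*((max m 1 : ℕ):ℝ) < 2*(d:ℝ)) : lamv d m ≤ 1/2 := by
  have h1 : (1:ℝ) ≤ ((max m 1 : ℕ):ℝ) := by
    exact_mod_cast Nat.one_le_iff_ne_zero.mpr (by positivity)
  unfold lamv
  rw [div_le_div_iff₀ (by linarith) (by norm_num)]
  linarith

lemma superharm (d m : ℕ) (hd : (10^7:ℝ) ≤ (d:ℝ))
    (hM5 : 5*((max m 1 : ℕ):ℝ) < 2*(d:ℝ))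
    (x : Zd d) (hx : m + 1 ≤ norm1 x) :
    (2*(d:ℝ))⁻¹ * (∑ i : Fin d, ∑ s : Bool, gfun d m (x + dir d i s)) ≤ gfun d m x := by
  classical
  set lam := lamv d m with hlamdef
  set Mn : ℕ := max m 1 with hMndef
  have hlam : lam = 2*(Mn:ℝ)/(2*(d:ℝ) - (Mn:ℝ)) := rfl
  have hlam_pos : 0 < lam := lamv_pos d m hM5
  have hlam_half : lam ≤ 1/2 := lamv_half d m hM5
  have hdpos : (0:ℝ) < d := by linarith
  set Kc : ℝ := lam*((m:ℝ)+2)/2 with hKc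
  have hKc0 : 0 ≤ Kc := by positivity
  obtain ⟨j, hj1, hjdef⟩ : ∃ j, 1 ≤ j ∧ norm1 x = m + j :=
    ⟨norm1 x - m, by omega, by omega⟩
  set U : ℝ := ((usq x : ℤ):ℝ) with hU
  have hUl : ((m:ℝ) + (j:ℝ)) ≤ U := by
    have := norm1_le_usq x
    rw [hU]
    have h2 : ((norm1 x : ℕ):ℝ) ≤ ((usq x : ℤ):ℝ) := by exact_mod_cast this
    rw [hjdef] at h2
    push_cast at h2
    linarith
  have hU1 : (1:ℝ) ≤ U := by
    have : (1:ℝ) ≤ (m:ℝ) + (j:ℝ) := by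
      have : (1:ℝ) ≤ (j:ℝ) := by exact_mod_cast hj1
      have hm0 : (0:ℝ) ≤ (m:ℝ) := by positivity
      linarith
    linarith
  set r : ℕ := rr x with hrdef
  have hr1 : 1 ≤ r := rr_pos_of_norm1_pos x (by omega)
  have hrd : r ≤ d := rr_le_d x
  have hrl : r ≤ m + j := by rw [← hjdef]; exact rr_le_norm1 x
  -- split g into the two parts
  have hsplit : ∀ v : Zd d, gfun d m v
      = lam^(norm1 v - m) + Kc / ((usq v : ℝ) + 1) := fun v => rfl
  -- the lambda part of the sum
  have hlampart : ∀ i : Fin d,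
      (∑ s : Bool, lam^(norm1 (x + dir d i s) - m))
        = if x i = 0 then 2*lam^(j+1) else lam^(j+1) + lam^(j-1) := by
    intro i
    rw [Fintype.sum_bool]
    by_cases h : x i = 0
    · rw [if_pos h, norm1_step_zero x i true h, norm1_step_zero x i false h]
      have he : norm1 x + 1 - m = j + 1 := by omega
      rw [he]; ring
    · rw [if_neg h]
      rcases lt_trichotomy (x i) 0 with hneg | h0 | hpos
      · obtain ⟨h1, h2⟩ := norm1_step_neg x i hneg
        have e1 : norm1 (x + dir d i false) - m = j + 1 := by omega
        have e2 : norm1 (x + dir d i true) - m = j - 1 := by omega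
        rw [e1, e2]; ring
      · exact absurd h0 h
      · obtain ⟨h1, h2⟩ := norm1_step_pos x i hpos
        have e1 : norm1 (x + dir d i true) - m = j + 1 := by omega
        have e2 : norm1 (x + dir d i false) - m = j - 1 := by omega
        rw [e1, e2]
  -- the F part of the sum
  have hFpart : ∀ i : Fin d,
      (∑ s : Bool, Kc / ((usq (x + dir d i s) : ℝ) + 1))
        = Kc * (1/(U + 2 + 2*((x i : ℤ):ℝ)) + 1/(U + 2 - 2*((x i : ℤ):ℝ))) := by
    intro i
    rw [Fintype.sum_bool]
    rw [usq_add_dir x i true, usq_add_dir x i false]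
    simp only [if_true, if_false]
    push_cast
    rw [hU]
    ring_nf
  -- per-coordinate square bound
  have hxsq : ∀ i : Fin d, ((x i : ℤ):ℝ)^2 ≤ U := by
    intro i
    rw [hU]
    have : (x i)^2 ≤ usq x := by
      unfold usq
      exact Finset.single_le_sum (fun k _ => sq_nonneg (x k)) (Finset.mem_univ i)
    exact_mod_cast this
  -- sum of squares identity
  have hsumsq : (∑ i : Fin d, ((x i : ℤ):ℝ)^2) = U := by
    rw [hU]
    unfold usq
    push_cast
    rfl
  -- bound the F-part sum using coreD1 and coreD2
  have hFsum : (∑ i : Fin d, (1/(U + 2 + 2*((x i : ℤ):ℝ)) + 1/(U + 2 - 2*((x i : ℤ):ℝ))))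
      ≤ 2*(d:ℝ)/(U+1) - (d:ℝ)/(U+3)^2 := by
    have step1 : (∑ i : Fin d, (1/(U + 2 + 2*((x i : ℤ):ℝ)) + 1/(U + 2 - 2*((x i : ℤ):ℝ))))
        ≤ ∑ i : Fin d, (2/(U+2) + 2*(2*((x i : ℤ):ℝ))^2/((U+1)*(U^2+4))) := by
      apply Finset.sum_le_sum
      intro i _
      exact coreD1 U (2*((x i : ℤ):ℝ)) hU1 (by nlinarith [hxsq i])
    have step2 : (∑ i : Fin d, (2/(U+2) + 2*(2*((x i : ℤ):ℝ))^2/((U+1)*(U^2+4))))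
        = 2*(d:ℝ)/(U+2) + 8*U/((U+1)*(U^2+4)) := by
      rw [Finset.sum_add_distrib, Finset.sum_const]
      simp only [Finset.card_univ, Fintype.card_fin, nsmul_eq_mul]
      have : (∑ i : Fin d, 2*(2*((x i : ℤ):ℝ))^2/((U+1)*(U^2+4)))
          = 8*(∑ i : Fin d, ((x i : ℤ):ℝ)^2)/((U+1)*(U^2+4)) := by
        rw [Finset.mul_sum, Finset.sum_div]
        apply Finset.sum_congr rfl
        intro i _
        ring
      rw [this, hsumsq]
      ring
    calc _ ≤ _ := step1
      _ = _ := step2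
      _ ≤ _ := coreD2 U d hU1 (by linarith)
  -- put it together
  rw [hsplit x]
  have hsum_split : (∑ i : Fin d, ∑ s : Bool, gfun d m (x + dir d i s))
      = (∑ i : Fin d, ∑ s : Bool, lam^(norm1 (x + dir d i s) - m))
        + (∑ i : Fin d, ∑ s : Bool, Kc / ((usq (x + dir d i s) : ℝ) + 1)) := by
    rw [← Finset.sum_add_distrib]
    apply Finset.sum_congr rfl
    intro i _
    rw [← Finset.sum_add_distrib]
    apply Finset.sum_congr rfl
    intro s _
    exact hsplit _
  rw [hsum_split]
  -- lambda sum value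
  have hlamsum : (∑ i : Fin d, ∑ s : Bool, lam^(norm1 (x + dir d i s) - m))
      = ((d:ℝ) - (r:ℝ))*(2*lam^(j+1)) + (r:ℝ)*(lam^(j+1) + lam^(j-1)) := by
    calc (∑ i : Fin d, ∑ s : Bool, lam^(norm1 (x + dir d i s) - m))
        = ∑ i : Fin d, (if x i = 0 then 2*lam^(j+1) else lam^(j+1) + lam^(j-1)) :=
          Finset.sum_congr rfl (fun i _ => hlampart i)
      _ = ((d:ℝ) - (r:ℝ))*(2*lam^(j+1)) + (r:ℝ)*(lam^(j+1) + lam^(j-1)) := by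
          rw [Finset.sum_ite]
          rw [Finset.sum_const, Finset.sum_const]
          have hcard : (Finset.univ.filter (fun i => x i = 0)).card = d - r := by
            have := Finset.card_filter_add_card_filter_not
              (s := (Finset.univ : Finset (Fin d))) (p := fun i => x i = 0)
            simp only [Finset.card_univ, Fintype.card_fin] at this
            have hrr : (Finset.univ.filter (fun i => ¬ x i = 0)).card = r := by
              rw [hrdef, rr]
            omega
          have hcard2 : (Finset.univ.filter (fun i => ¬ x i = 0)).card = r := by
            rw [hrdef, rr]
          rw [hcard, hcard2]
          have hcast : ((d - r : ℕ):ℝ) = (d:ℝ) - (r:ℝ) := by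
            rw [Nat.cast_sub hrd]
          rw [nsmul_eq_mul, nsmul_eq_mul, hcast]
  rw [hlamsum]
  -- F sum bound
  have hFsum2 : (∑ i : Fin d, ∑ s : Bool, Kc / ((usq (x + dir d i s) : ℝ) + 1))
      ≤ Kc * (2*(d:ℝ)/(U+1) - (d:ℝ)/(U+3)^2) := by
    calc (∑ i : Fin d, ∑ s : Bool, Kc / ((usq (x + dir d i s) : ℝ) + 1))
        = Kc * (∑ i : Fin d, (1/(U + 2 + 2*((x i : ℤ):ℝ)) + 1/(U + 2 - 2*((x i : ℤ):ℝ)))) := by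
          rw [Finset.mul_sum]
          exact Finset.sum_congr rfl (fun i _ => hFpart i)
      _ ≤ Kc * (2*(d:ℝ)/(U+1) - (d:ℝ)/(U+3)^2) := by
          apply mul_le_mul_of_nonneg_left hFsum hKc0
  -- zone inequality from coreE
  have hUb : U ≤ ((m:ℝ) + (j:ℝ) - (r:ℝ) + 1)^2 + (r:ℝ) - 1 := by
    have hs := usq_spike x
    rw [hjdef, ← hrdef] at hs
    rw [hU]
    exact_mod_cast hs
  have hzone := coreE m Mn r j (d:ℝ) lam U hd hMndef hM5 hlam hr1
    (by exact_mod_cast hrd) hrl hj1 hUl hUb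
  -- final assembly
  have e1 : lam^(j+1) = lam^(j-1)*lam^2 := by
    rw [← pow_add]
    congr 1
    omega
  have e2 : lam^(norm1 x - m) = lam^(j-1)*lam := by
    rw [← pow_succ]
    congr 1
    omega
  have hA : (2*(d:ℝ))⁻¹ * (((d:ℝ)-(r:ℝ))*(2*lam^(j+1)) + (r:ℝ)*(lam^(j+1)+lam^(j-1)))
      = lam^(j-1)*lam + lam^(j-1)*(lam^2 - lam + (r:ℝ)*(1-lam^2)/(2*(d:ℝ))) := by
    rw [e1]
    field_simp
    ring
  have hB3 : (2*(d:ℝ))⁻¹ * (Kc * (2*(d:ℝ)/(U+1) - (d:ℝ)/(U+3)^2))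
      = Kc/(U+1) - Kc/(2*(U+3)^2) := by
    have hU1' : U + 1 ≠ 0 := by positivity
    have hU3' : (U+3)^2 ≠ 0 := by positivity
    field_simp
  have hzone' : lam^(j-1)*(lam^2 - lam + (r:ℝ)*(1-lam^2)/(2*(d:ℝ)))
      ≤ Kc/(2*(U+3)^2) := by
    have hid : lam*((m:ℝ)+2) / (4*(U+3)^2) = Kc/(2*(U+3)^2) := by
      rw [hKc]
      have : (U+3)^2 ≠ 0 := by positivity
      field_simp
      ring
    rw [← hid]
    exact hzone
  have hFmono : (2*(d:ℝ))⁻¹ * (∑ i : Fin d, ∑ s : Bool, Kc / ((usq (x + dir d i s) : ℝ) + 1))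
      ≤ (2*(d:ℝ))⁻¹ * (Kc * (2*(d:ℝ)/(U+1) - (d:ℝ)/(U+3)^2)) := by
    apply mul_le_mul_of_nonneg_left hFsum2 (by positivity)
  set SF := (∑ i : Fin d, ∑ s : Bool, Kc / ((usq (x + dir d i s) : ℝ) + 1)) with hSF
  rw [mul_add, e2]
  have hUeq : ((usq x : ℝ) + 1) = U + 1 := by rw [hU]
  rw [hUeq]
  linarith [hA, hB3, hzone', hFmono]

lemma avoid_nonneg (K : Set (Zd d)) : ∀ (n : ℕ) (x : Zd d), 0 ≤ avoidProb d K n x := by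
  intro n
  induction n with
  | zero => intro x; simp [avoidProb]
  | succ n ih =>
    intro x
    simp only [avoidProb]
    apply mul_nonneg (by positivity)
    apply Finset.sum_nonneg
    intro i _
    apply Finset.sum_nonneg
    intro s _
    split_ifs
    · exact le_rfl
    · exact ih _

lemma gfun_nonneg (d m : ℕ) (hM5 : 5*((max m 1 : ℕ):ℝ) < 2*(d:ℝ)) (x : Zd d) :
    0 ≤ gfun d m x := by
  have h1 := lamv_pos d m hM5
  have h2 : (0:ℝ) ≤ ((usq x : ℤ):ℝ) := by exact_mod_cast usq_nonneg x
  unfold gfun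
  have hm : (0:ℝ) ≤ (m:ℝ) := by positivity
  positivity

lemma gfun_ge_one (d m : ℕ) (hM5 : 5*((max m 1 : ℕ):ℝ) < 2*(d:ℝ)) (x : Zd d)
    (hx : norm1 x ≤ m) : 1 ≤ gfun d m x := by
  have h1 := lamv_pos d m hM5
  have h2 : (0:ℝ) ≤ ((usq x : ℤ):ℝ) := by exact_mod_cast usq_nonneg x
  have he : norm1 x - m = 0 := by omega
  unfold gfun
  rw [he, pow_zero]
  have hm : (0:ℝ) ≤ (m:ℝ) := by positivity
  have : 0 ≤ (lamv d m)*((m:ℝ)+2)/2 / (((usq x : ℤ):ℝ) + 1) := by positivity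
  linarith

lemma gfun_boundary (d m : ℕ) (hM5 : 5*((max m 1 : ℕ):ℝ) < 2*(d:ℝ)) (x : Zd d)
    (hx : norm1 x = m + 1) : gfun d m x ≤ (3/2) * lamv d m := by
  have h1 := lamv_pos d m hM5
  unfold gfun
  have he : norm1 x - m = 1 := by omega
  rw [he, pow_one]
  have hu : ((m:ℝ) + 1) ≤ ((usq x : ℤ):ℝ) := by
    have := norm1_le_usq x
    rw [hx] at this
    exact_mod_cast this
  have hle : (lamv d m)*((m:ℝ)+2)/2 / (((usq x : ℤ):ℝ) + 1)
      ≤ (lamv d m)*((m:ℝ)+2)/2 / ((m:ℝ)+2) := by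
    apply div_le_div_of_nonneg_left (by positivity) (by positivity) (by linarith)
  have heq : (lamv d m)*((m:ℝ)+2)/2 / ((m:ℝ)+2) = (lamv d m)/2 := by
    have : ((m:ℝ)+2) ≠ 0 := by positivity
    field_simp
  rw [heq] at hle
  linarith

lemma main_ind (d m : ℕ) (hd : (10^7:ℝ) ≤ (d:ℝ))
    (hM5 : 5*((max m 1 : ℕ):ℝ) < 2*(d:ℝ)) :
    ∀ (n : ℕ) (x : Zd d), m + 1 ≤ norm1 x →
      1 - gfun d m x ≤ avoidProb d {z : Zd d | norm1 z ≤ m} n x := by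
  have hdpos : (0:ℝ) < d := by linarith
  intro n
  induction n with
  | zero =>
    intro x hx
    have := gfun_nonneg d m hM5 x
    simp only [avoidProb]
    linarith
  | succ n ih =>
    intro x hx
    simp only [avoidProb]
    have h2d : (0:ℝ) < 2*(d:ℝ) := by linarith
    have hone : (∑ i : Fin d, ∑ s : Bool, (1 - gfun d m (x + dir d i s)))
        = 2*(d:ℝ) - (∑ i : Fin d, ∑ s : Bool, gfun d m (x + dir d i s)) := by
      have e1 : ∀ i : Fin d, (∑ s : Bool, (1 - gfun d m (x + dir d i s)))
          = 2 - ∑ s : Bool, gfun d m (x + dir d i s) := by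
        intro i
        rw [Fintype.sum_bool, Fintype.sum_bool]
        ring
      calc (∑ i : Fin d, ∑ s : Bool, (1 - gfun d m (x + dir d i s)))
          = ∑ i : Fin d, (2 - ∑ s : Bool, gfun d m (x + dir d i s)) :=
            Finset.sum_congr rfl (fun i _ => e1 i)
        _ = (∑ _i : Fin d, (2:ℝ)) - ∑ i : Fin d, ∑ s : Bool, gfun d m (x + dir d i s) :=
            Finset.sum_sub_distrib _ _
        _ = 2*(d:ℝ) - ∑ i : Fin d, ∑ s : Bool, gfun d m (x + dir d i s) := by
            rw [Finset.sum_const, Finset.card_univ, Fintype.card_fin, nsmul_eq_mul]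
            ring_nf
    have hsup := superharm d m hd hM5 x hx
    have key : 1 - gfun d m x
        ≤ (2*(d:ℝ))⁻¹ * (∑ i : Fin d, ∑ s : Bool, (1 - gfun d m (x + dir d i s))) := by
      have hexp : (2*(d:ℝ))⁻¹ * (∑ i : Fin d, ∑ s : Bool, (1 - gfun d m (x + dir d i s)))
          = 1 - (2*(d:ℝ))⁻¹ * (∑ i : Fin d, ∑ s : Bool, gfun d m (x + dir d i s)) := by
        rw [hone, mul_sub, inv_mul_cancel₀ (ne_of_gt h2d)]
      rw [hexp]
      linarith [hsup]
    refine key.trans ?_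
    apply mul_le_mul_of_nonneg_left _ (inv_nonneg.mpr h2d.le)
    apply Finset.sum_le_sum
    intro i _
    apply Finset.sum_le_sum
    intro s _
    by_cases hm : x + dir d i s ∈ {z : Zd d | norm1 z ≤ m}
    · rw [if_pos hm]
      have := gfun_ge_one d m hM5 (x + dir d i s) hm
      linarith
    · rw [if_neg hm]
      apply ih
      have hnot : ¬ (norm1 (x + dir d i s) ≤ m) := hm
      omega

lemma final_arith (M dd : ℝ) (hM : 1 ≤ M) (h5 : 5*M < 2*dd) :
    1 - 2*(2*M/(2*dd - M)) ≤ (2*dd)⁻¹*((2*dd - M)*(1 - (3/2)*(2*M/(2*dd-M)))) := by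
  have h1 : (0:ℝ) < 2*dd - M := by linarith
  have h2 : (0:ℝ) < dd := by linarith
  rw [← sub_nonneg]
  have expand : (2*dd)⁻¹*((2*dd - M)*(1 - (3/2)*(2*M/(2*dd-M)))) - (1 - 2*(2*M/(2*dd - M)))
      = (2*M)^2/((2*dd)*(2*dd - M)) := by
    field_simp
    ring
  rw [expand]
  positivity

lemma sum_ite_zero (x : Zd d) (a b : ℝ) :
    (∑ i : Fin d, if x i = 0 then a else b)
      = ((d:ℝ) - (rr x : ℝ))*a + (rr x : ℝ)*b := by
  rw [Finset.sum_ite, Finset.sum_const, Finset.sum_const]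
  have hcard2 : (Finset.univ.filter (fun i : Fin d => ¬ x i = 0)).card = rr x := by
    rw [rr]
  have hcard : (Finset.univ.filter (fun i : Fin d => x i = 0)).card = d - rr x := by
    have := Finset.card_filter_add_card_filter_not
      (s := (Finset.univ : Finset (Fin d))) (p := fun i => x i = 0)
    simp only [Finset.card_univ, Fintype.card_fin] at this
    omega
  rw [hcard, hcard2]
  have hrd : rr x ≤ d := rr_le_d x
  have hcast : ((d - rr x : ℕ):ℝ) = (d:ℝ) - (rr x:ℝ) := by
    rw [Nat.cast_sub hrd]
  rw [nsmul_eq_mul, nsmul_eq_mul, hcast]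

end EscapeAux

open EscapeAux

/-- Lemma 3.3: there is a dimension-independent constant `c` such that for `d ≥ c` and
`y ∈ ℤ^d` with `|y|₁ ≤ d/2`, the walk started at `y` never returns to the closed
ℓ¹-ball of radius `|y|₁` with probability at least `1 − 4(|y|₁ ∨ 1)/(2d − (|y|₁ ∨ 1))`. -/
theorem escape_l1_ball_lower_bound :
    ∃ c : ℝ, 0 < c ∧ ∀ d : ℕ, c ≤ (d : ℝ) → ∀ y : Zd d, (norm1 y : ℝ) ≤ d / 2 →
      1 - 4 * (max (norm1 y) 1 : ℕ) / (2 * d - (max (norm1 y) 1 : ℕ) : ℝ) ≤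
        escapeProb d {z | norm1 z ≤ norm1 y} y := by
  refine ⟨10^7, by norm_num, ?_⟩
  intro d hd y hy
  set m : ℕ := norm1 y with hm
  set Mn : ℕ := max m 1 with hMn
  have hdpos : (0:ℝ) < d := by
    have : (0:ℝ) < 10^7 := by norm_num
    linarith
  have hMnhalf : (Mn:ℝ) ≤ (d:ℝ)/2 := by
    rcases Nat.eq_zero_or_pos m with h0 | h1
    · have : Mn = 1 := by rw [hMn, h0]; simp
      rw [this]
      norm_num
      linarith
    · have : Mn = m := by rw [hMn]; exact max_eq_left h1
      rw [this]
      exact hy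
  have h2dMn : (0:ℝ) < 2*(d:ℝ) - (Mn:ℝ) := by linarith
  have hM1R : (1:ℝ) ≤ (Mn:ℝ) := by
    have : 1 ≤ Mn := by rw [hMn]; exact le_max_right m 1
    exact_mod_cast this
  by_cases hM5 : 5*((Mn:ℕ):ℝ) < 2*(d:ℝ)
  · -- main case
    set lam : ℝ := lamv d m with hlamdef
    have hlam_pos : 0 < lam := lamv_pos d m hM5
    have hlam_half : lam ≤ 1/2 := lamv_half d m hM5
    have hlam_eq : lam = 2*(Mn:ℝ)/(2*(d:ℝ) - (Mn:ℝ)) := rfl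
    have htarget : 1 - 4 * ((Mn:ℕ):ℝ) / (2 * (d:ℝ) - ((Mn:ℕ):ℝ)) = 1 - 2*lam := by
      rw [hlam_eq]
      ring
    rw [htarget]
    apply le_ciInf
    intro n
    cases n with
    | zero =>
      simp only [avoidProb]
      have : 0 ≤ 2*lam := by positivity
      linarith
    | succ n =>
      set c : ℝ := 1 - (3/2)*lam with hc
      have hc0 : 0 ≤ c := by rw [hc]; linarith
      have havoidlb : ∀ v : Zd d, norm1 v = m + 1 →
          c ≤ avoidProb d {z : Zd d | norm1 z ≤ m} n v := by
        intro v hv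
        have h1 := main_ind d m hd hM5 n v (by omega)
        have h2 := gfun_boundary d m hM5 v hv
        rw [hc]
        rw [hlamdef]
        linarith
      have main : (2*(d:ℝ))⁻¹ * (∑ i : Fin d, (if y i = 0 then 2*c else c))
          ≤ avoidProb d {z : Zd d | norm1 z ≤ m} (n+1) y := by
        simp only [avoidProb]
        apply mul_le_mul_of_nonneg_left _ (by positivity)
        apply Finset.sum_le_sum
        intro i _
        rw [Fintype.sum_bool]
        by_cases hzi : y i = 0
        · rw [if_pos hzi]
          have ht : norm1 (y + dir d i true) = m + 1 := norm1_step_zero y i true hzi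
          have hf : norm1 (y + dir d i false) = m + 1 := norm1_step_zero y i false hzi
          have hmt : ¬ (y + dir d i true ∈ {z : Zd d | norm1 z ≤ m}) := by
            simp only [Set.mem_setOf_eq]; omega
          have hmf : ¬ (y + dir d i false ∈ {z : Zd d | norm1 z ≤ m}) := by
            simp only [Set.mem_setOf_eq]; omega
          rw [if_neg hmt, if_neg hmf]
          have b1 := havoidlb _ ht
          have b2 := havoidlb _ hf
          linarith
        · rw [if_neg hzi]
          rcases lt_trichotomy (y i) 0 with hneg | h0 | hpos
          · obtain ⟨h1, h2⟩ := norm1_step_neg y i hneg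
            have hmt : (y + dir d i true) ∈ {z : Zd d | norm1 z ≤ m} := by
              simp only [Set.mem_setOf_eq]; omega
            have hmf : ¬ ((y + dir d i false) ∈ {z : Zd d | norm1 z ≤ m}) := by
              simp only [Set.mem_setOf_eq]; omega
            rw [if_pos hmt, if_neg hmf]
            have b1 := havoidlb _ h1
            linarith
          · exact absurd h0 hzi
          · obtain ⟨h1, h2⟩ := norm1_step_pos y i hpos
            have hmt : ¬ ((y + dir d i true) ∈ {z : Zd d | norm1 z ≤ m}) := by
              simp only [Set.mem_setOf_eq]; omega
            have hmf : (y + dir d i false) ∈ {z : Zd d | norm1 z ≤ m} := by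
              simp only [Set.mem_setOf_eq]; omega
            rw [if_neg hmt, if_pos hmf]
            have b1 := havoidlb _ h1
            linarith
      have hsum : (∑ i : Fin d, (if y i = 0 then 2*c else c))
          = ((d:ℝ) - (rr y : ℝ))*(2*c) + (rr y : ℝ)*c := sum_ite_zero y (2*c) c
      have hrm : (rr y : ℝ) ≤ (Mn:ℝ) := by
        have h1 : rr y ≤ m := by rw [hm]; exact rr_le_norm1 y
        have h2 : m ≤ Mn := by rw [hMn]; exact le_max_left m 1
        exact_mod_cast le_trans h1 h2
      have hlow : (2*(d:ℝ))⁻¹*((2*(d:ℝ) - (Mn:ℝ))*c)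
          ≤ (2*(d:ℝ))⁻¹ * (∑ i : Fin d, (if y i = 0 then 2*c else c)) := by
        rw [hsum]
        apply mul_le_mul_of_nonneg_left _ (by positivity)
        have : ((d:ℝ) - (rr y:ℝ))*(2*c) + (rr y:ℝ)*c = (2*(d:ℝ) - (rr y:ℝ))*c := by ring
        rw [this]
        apply mul_le_mul_of_nonneg_right _ hc0
        linarith
      have hfa := final_arith (Mn:ℝ) (d:ℝ) hM1R hM5
      rw [← hlam_eq] at hfa
      rw [hc] at hlow
      linarith [hfa, hlow, main]
  · -- trivial case
    push_neg at hM5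
    have h0 : (0:ℝ) ≤ escapeProb d {z : Zd d | norm1 z ≤ m} y := by
      apply le_ciInf
      intro n
      exact avoid_nonneg _ n y
    have h1 : (1:ℝ) ≤ 4 * ((Mn:ℕ):ℝ) / (2 * (d:ℝ) - ((Mn:ℕ):ℝ)) := by
      rw [le_div_iff₀ h2dMn]
      linarith
    linarith
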